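/- arXiv:1805.03744 — 2 statements merged into one kernel-verified Lean document; each statement's English description precedes it below -/
import Mathlib

section
/- The bias of the TSLS identified value admits the exact pairwise decomposition: τ_TSLS − τ = [ Σ_{1 ≤ j < l ≤ J} n_CO,j n_CO,l (n_l − n_j)(τ_j − τ_l) ] / [ (Σ_{l=1}^J n_CO,l (n − n_l)) · (Σ_{l=1}^J n_CO,l) ]. -/
open Finset

lemma pair_sum {J : ℕ} (f : Fin J → Fin J → ℝ) (hd : ∀ j, f j j = 0) :
    ∑ j, ∑ l ∈ univ.filter (fun l => j < l), (f j l + f l j) = ∑ j, ∑ l, f j l := by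
  have h1 : ∀ j : Fin J, ∑ l, f j l =
      (∑ l, if l < j then f j l else 0) + (∑ l, if j < l then f j l else 0) := by
    intro j
    rw [← Finset.sum_add_distrib]
    apply Finset.sum_congr rfl
    intro l _
    rcases lt_trichotomy l j with h | h | h
    · simp [h, not_lt.2 h.le]
    · subst h; simp [hd]
    · simp [h, not_lt.2 h.le]
  have h2 : (∑ j : Fin J, ∑ l : Fin J, if j < l then f l j else 0) =
      ∑ j : Fin J, ∑ l : Fin J, if l < j then f j l else 0 := by
    exact Finset.sum_comm
  calc ∑ j, ∑ l ∈ univ.filter (fun l => j < l), (f j l + f l j)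
      = ∑ j : Fin J, ((∑ l : Fin J, if j < l then f j l else 0) +
          (∑ l : Fin J, if j < l then f l j else 0)) := by
        refine Finset.sum_congr rfl fun j _ => ?_
        rw [Finset.sum_filter, ← Finset.sum_add_distrib]
        refine Finset.sum_congr rfl fun l _ => ?_
        split <;> simp
    _ = ∑ j : Fin J, ((∑ l : Fin J, if j < l then f j l else 0) +
          (∑ l : Fin J, if l < j then f j l else 0)) := by
        rw [Finset.sum_add_distrib, h2, ← Finset.sum_add_distrib]
    _ = ∑ j, ∑ l, f j l := by
        refine Finset.sum_congr rfl fun j _ => ?_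
        rw [h1 j, add_comm]

/-- Exact pairwise decomposition of the bias of the TSLS identified value:
`τ_TSLS − τ = [Σ_{j<l} n_CO,j n_CO,l (n_l − n_j)(τ_j − τ_l)] /
[(Σ_l n_CO,l (n − n_l))(Σ_l n_CO,l)]`. -/
theorem stmt5
    (J : ℕ) (hJ : 2 ≤ J)
    (n nCO : Fin J → ℕ) (hn : ∀ j, 1 ≤ n j) (hCO : ∀ j, 1 ≤ nCO j)
    (τc : Fin J → ℝ)
    (N : ℕ) (hN : N = ∑ j, n j)
    (τ τTSLS : ℝ)
    (hτ : τ = (∑ j, (nCO j : ℝ) * τc j) / (∑ j, (nCO j : ℝ)))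
    (hτTSLS : τTSLS = (∑ j, (nCO j : ℝ) * ((N : ℝ) - n j) * τc j) /
      (∑ j, (nCO j : ℝ) * ((N : ℝ) - n j))) :
    τTSLS - τ =
      (∑ j, ∑ l ∈ univ.filter (fun l => j < l),
          (nCO j : ℝ) * nCO l * ((n l : ℝ) - n j) * (τc j - τc l)) /
        ((∑ l, (nCO l : ℝ) * ((N : ℝ) - n l)) * (∑ l, (nCO l : ℝ))) := by
  have hJ0 : 0 < J := by omega
  have hcard : 1 < Fintype.card (Fin J) := by rw [Fintype.card_fin]; omega
  have hnl : ∀ l : Fin J, (n l : ℝ) < N := by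
    intro l
    obtain ⟨m, hm⟩ := Fintype.exists_ne_of_one_lt_card hcard l
    have : n l < ∑ j, n j :=
      Finset.single_lt_sum hm (mem_univ l) (mem_univ m) (hn m)
        (fun k _ _ => Nat.zero_le _)
    rw [hN]; exact_mod_cast this
  have hD : (0 : ℝ) < ∑ j, (nCO j : ℝ) :=
    Finset.sum_pos (fun j _ => by exact_mod_cast hCO j) ⟨⟨0, hJ0⟩, mem_univ _⟩
  have hB : (0 : ℝ) < ∑ j, (nCO j : ℝ) * ((N : ℝ) - n j) := by
    refine Finset.sum_pos (fun j _ => mul_pos ?_ ?_) ⟨⟨0, hJ0⟩, mem_univ _⟩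
    · exact_mod_cast hCO j
    · linarith [hnl j]
  rw [hτ, hτTSLS, div_sub_div _ _ hB.ne' hD.ne']
  congr 1
  symm
  have key := pair_sum (fun j l => (nCO j : ℝ) * nCO l * τc j * ((n l : ℝ) - n j))
    (fun j => by ring)
  calc (∑ j, ∑ l ∈ univ.filter (fun l => j < l),
          (nCO j : ℝ) * nCO l * ((n l : ℝ) - n j) * (τc j - τc l))
      = ∑ j, ∑ l ∈ univ.filter (fun l => j < l),
          (((nCO j : ℝ) * nCO l * τc j * ((n l : ℝ) - n j)) +
           ((nCO l : ℝ) * nCO j * τc l * ((n j : ℝ) - n l))) := by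
        refine Finset.sum_congr rfl fun j _ => Finset.sum_congr rfl fun l _ => ?_
        ring
    _ = ∑ j, ∑ l, (nCO j : ℝ) * nCO l * τc j * ((n l : ℝ) - n j) := key
    _ = (∑ j, (nCO j : ℝ) * ((N : ℝ) - n j) * τc j) * (∑ l, (nCO l : ℝ)) -
        (∑ j, (nCO j : ℝ) * τc j) * (∑ l, (nCO l : ℝ) * ((N : ℝ) - n l)) := by
        rw [Finset.sum_mul_sum, Finset.sum_mul_sum, ← Finset.sum_sub_distrib]
        refine Finset.sum_congr rfl fun j _ => ?_
        rw [← Finset.sum_sub_distrib]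
        refine Finset.sum_congr rfl fun l _ => ?_
        ring
    _ = (∑ j, (nCO j : ℝ) * ((N : ℝ) - n j) * τc j) * (∑ l, (nCO l : ℝ)) -
        (∑ j, (nCO j : ℝ) * ((N : ℝ) - n j)) * (∑ l, (nCO l : ℝ) * τc l) := by
        ring
end

section
/- Under cluster randomization (uniformly random treated subset of size m, 0 < m < J), monotonicity, the exclusion restriction, and n_CO,j ≥ 1 for every cluster j, the effect-ratio estimator identifies the overall CACE exactly in finite samples: E[ (1/m)Σ_j Z_j Y_j − (1/(J−m))Σ_j (1−Z_j) Y_j ] / E[ (1/m)Σ_j Z_j D_j − (1/(J−m))Σ_j (1−Z_j) D_j ] = τ, and the denominator expectation equals (1/J)Σ_j n_CO,j > 0. -/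
open Finset

/-- Average of `f` over all size-`m` treated subsets of the `J` clusters
(uniform cluster randomization). -/
noncomputable def clExpect (J m : ℕ) (f : Finset (Fin J) → ℝ) : ℝ :=
  (∑ s ∈ (univ : Finset (Finset (Fin J))).filter (fun s => s.card = m), f s) / (J.choose m)

lemma card_mem_filter (J m : ℕ) (hm0 : 0 < m) (j : Fin J) :
    (((univ : Finset (Finset (Fin J))).filter (fun s => s.card = m)).filter
      (fun s => j ∈ s)).card = (J-1).choose (m-1) := by
  have himg : ((univ : Finset (Finset (Fin J))).filter (fun s => s.card = m)).filter
      (fun s => j ∈ s) = ((univ.erase j).powersetCard (m-1)).image (insert j) := by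
    ext s
    simp only [mem_filter, mem_univ, true_and, mem_image, mem_powersetCard]
    constructor
    · rintro ⟨hc, hj⟩
      refine ⟨s.erase j, ⟨?_, ?_⟩, by simp [insert_erase hj]⟩
      · intro x hx
        simp only [mem_erase] at hx ⊢
        exact ⟨hx.1, mem_univ _⟩
      · rw [card_erase_of_mem hj, hc]
    · rintro ⟨t, ⟨hts, hct⟩, rfl⟩
      have hjt : j ∉ t := fun h => (mem_erase.1 (hts h)).1 rfl
      refine ⟨?_, mem_insert_self _ _⟩
      rw [card_insert_of_notMem hjt, hct]
      omega
  rw [himg, card_image_of_injOn, card_powersetCard, card_erase_of_mem (mem_univ j), card_univ,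
    Fintype.card_fin]
  intro a ha b hb hab
  simp only [mem_coe, mem_powersetCard] at ha hb
  have hja : j ∉ a := fun h => (mem_erase.1 (ha.1 h)).1 rfl
  have hjb : j ∉ b := fun h => (mem_erase.1 (hb.1 h)).1 rfl
  rw [← erase_insert hja, ← erase_insert hjb, hab]

lemma card_not_mem_filter (J m : ℕ) (j : Fin J) :
    (((univ : Finset (Finset (Fin J))).filter (fun s => s.card = m)).filter
      (fun s => j ∉ s)).card = (J-1).choose m := by
  have h : ((univ : Finset (Finset (Fin J))).filter (fun s => s.card = m)).filter
      (fun s => j ∉ s) = (univ.erase j).powersetCard m := by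
    ext s
    simp only [mem_filter, mem_univ, true_and, mem_powersetCard, subset_erase, subset_univ,
      true_and]
    tauto
  rw [h, card_powersetCard, card_erase_of_mem (mem_univ j), card_univ, Fintype.card_fin]

lemma clExpect_lin (J m : ℕ) (hm0 : 0 < m) (hmJ : m < J) (A B : Fin J → ℝ) :
    clExpect J m (fun s => (∑ j ∈ s, A j) / m - (∑ j ∈ sᶜ, B j) / ((J : ℝ) - m))
      = (1 / (J : ℝ)) * ∑ j, (A j - B j) := by
  have hsumA : ∑ s ∈ (univ : Finset (Finset (Fin J))).filter (fun s => s.card = m),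
      ∑ j ∈ s, A j = ((J-1).choose (m-1) : ℝ) * ∑ j, A j := by
    have h1 : ∀ s : Finset (Fin J), ∑ j ∈ s, A j = ∑ j, if j ∈ s then A j else 0 := by
      intro s; rw [← sum_filter]; congr 1; ext x; simp
    simp_rw [h1]
    rw [Finset.sum_comm, mul_sum]
    refine Finset.sum_congr rfl fun j _ => ?_
    rw [← sum_filter, sum_const, card_mem_filter J m hm0 j, nsmul_eq_mul]
    simp
  have hsumB : ∑ s ∈ (univ : Finset (Finset (Fin J))).filter (fun s => s.card = m),
      ∑ j ∈ sᶜ, B j = ((J-1).choose m : ℝ) * ∑ j, B j := by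
    have h1 : ∀ s : Finset (Fin J), ∑ j ∈ sᶜ, B j = ∑ j, if j ∉ s then B j else 0 := by
      intro s; rw [← sum_filter]; congr 1; ext x; simp
    simp_rw [h1]
    rw [Finset.sum_comm, mul_sum]
    refine Finset.sum_congr rfl fun j _ => ?_
    rw [← sum_filter, sum_const, card_not_mem_filter J m j, nsmul_eq_mul]
  have hJpos : 0 < J := hm0.trans hmJ
  have hJm : (J.choose m : ℝ) ≠ 0 := by
    exact_mod_cast (Nat.choose_pos hmJ.le).ne'
  have hm : (m : ℝ) ≠ 0 := by exact_mod_cast hm0.ne'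
  have hJmm : (J : ℝ) - m ≠ 0 := by
    have : (m : ℝ) < J := by exact_mod_cast hmJ
    linarith
  have hJ0 : (J : ℝ) ≠ 0 := by exact_mod_cast hJpos.ne'
  have hnat1 : J * (J-1).choose (m-1) = J.choose m * m := by
    have h := Nat.add_one_mul_choose_eq (J-1) (m-1)
    simpa [Nat.succ_eq_add_one, show J-1+1 = J by omega, show m-1+1 = m by omega] using h
  have key1 : (m : ℝ) * (J.choose m : ℝ) = (J : ℝ) * ((J-1).choose (m-1) : ℝ) := by
    have := congrArg (Nat.cast : ℕ → ℝ) hnat1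
    push_cast at this
    linarith
  have hpascal : (J-1).choose (m-1) + (J-1).choose m = J.choose m := by
    have h := Nat.choose_succ_succ (J-1) (m-1)
    simp only [Nat.succ_eq_add_one] at h
    rw [show J-1+1 = J by omega, show m-1+1 = m by omega] at h
    omega
  have hcast : ((J-1).choose (m-1) : ℝ) + ((J-1).choose m : ℝ) = (J.choose m : ℝ) := by
    exact_mod_cast hpascal
  have key2 : ((J : ℝ) - m) * (J.choose m : ℝ) = (J : ℝ) * ((J-1).choose m : ℝ) := by
    linear_combination -key1 - (J : ℝ) * hcast
  unfold clExpect
  rw [sum_sub_distrib, ← sum_div, ← sum_div, hsumA, hsumB, sum_sub_distrib]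
  field_simp
  linear_combination (-((J : ℝ) - m) * (∑ j, A j)) * key1 + (m : ℝ) * (∑ j, B j) * key2

/-- Under cluster randomization, monotonicity, the exclusion restriction, and at least one
complier per cluster, the effect-ratio estimator identifies the overall CACE exactly in
finite samples, and the denominator expectation equals `(1/J) Σ_j n_CO,j > 0`. -/
theorem stmt12
    (J m : ℕ) (hm0 : 0 < m) (hmJ : m < J)
    (n : Fin J → ℕ) (hn : ∀ j, 1 ≤ n j)
    -- potential compliances and potential outcomes (exclusion restriction:
    -- outcomes depend only on the treatment received)
    (D1 D0 : (j : Fin J) → Fin (n j) → Bool)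
    (Y : (j : Fin J) → Fin (n j) → Bool → ℝ)
    -- monotonicity: no defiers
    (mono : ∀ j i, D0 j i = true → D1 j i = true)
    (nCO : Fin J → ℕ)
    (hnCO : ∀ j, nCO j =
      (univ.filter (fun i => D1 j i = true ∧ D0 j i = false)).card)
    (hnCO1 : ∀ j, 1 ≤ nCO j)
    -- overall complier average causal effect
    (τ : ℝ)
    (hτ : τ = (∑ j, ∑ i ∈ univ.filter (fun i => D1 j i = true ∧ D0 j i = false),
        (Y j i true - Y j i false)) / (∑ j, (nCO j : ℝ)))
    -- observed cluster totals under assignment s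
    (Yt Dt : Finset (Fin J) → Fin J → ℝ)
    (hYt : ∀ s j, Yt s j = ∑ i, Y j i (if j ∈ s then D1 j i else D0 j i))
    (hDt : ∀ s j, Dt s j =
      ∑ i, (if (if j ∈ s then D1 j i else D0 j i) then (1 : ℝ) else 0))
    (num den : Finset (Fin J) → ℝ)
    (hnum : ∀ s, num s = (∑ j ∈ s, Yt s j) / m - (∑ j ∈ sᶜ, Yt s j) / ((J : ℝ) - m))
    (hden : ∀ s, den s = (∑ j ∈ s, Dt s j) / m - (∑ j ∈ sᶜ, Dt s j) / ((J : ℝ) - m)) :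
    clExpect J m den = (1 / (J : ℝ)) * ∑ j, (nCO j : ℝ) ∧
    0 < clExpect J m den ∧
    clExpect J m num / clExpect J m den = τ := by
  -- canonical per-cluster totals
  set Ad : Fin J → ℝ := fun j => ∑ i, (if D1 j i then (1 : ℝ) else 0) with hAd
  set Bd : Fin J → ℝ := fun j => ∑ i, (if D0 j i then (1 : ℝ) else 0) with hBd
  set An : Fin J → ℝ := fun j => ∑ i, Y j i (D1 j i) with hAn
  set Bn : Fin J → ℝ := fun j => ∑ i, Y j i (D0 j i) with hBn
  have hdenf : den = fun s => (∑ j ∈ s, Ad j) / m - (∑ j ∈ sᶜ, Bd j) / ((J : ℝ) - m) := by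
    funext s
    rw [hden s]
    congr 1
    · congr 1
      refine Finset.sum_congr rfl fun j hj => ?_
      rw [hDt]; simp only [if_pos hj]; rfl
    · congr 1
      refine Finset.sum_congr rfl fun j hj => ?_
      rw [hDt]
      simp only [mem_compl] at hj
      simp only [if_neg hj]; rfl
  have hnumf : num = fun s => (∑ j ∈ s, An j) / m - (∑ j ∈ sᶜ, Bn j) / ((J : ℝ) - m) := by
    funext s
    rw [hnum s]
    congr 1
    · congr 1
      refine Finset.sum_congr rfl fun j hj => ?_
      rw [hYt]; simp only [if_pos hj]; rfl
    · congr 1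
      refine Finset.sum_congr rfl fun j hj => ?_
      rw [hYt]
      simp only [mem_compl] at hj
      simp only [if_neg hj]; rfl
  have hden2 : ∀ j, Ad j - Bd j = (nCO j : ℝ) := by
    intro j
    rw [hnCO j]
    have : Ad j - Bd j = ∑ i, ((if D1 j i then (1:ℝ) else 0) - (if D0 j i then (1:ℝ) else 0)) := by
      simp [hAd, hBd, Finset.sum_sub_distrib]
    rw [this]
    rw [Finset.card_filter]
    push_cast
    refine Finset.sum_congr rfl fun i _ => ?_
    cases h1 : D1 j i <;> cases h0 : D0 j i
    · simp [h1, h0]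
    · exact absurd (mono j i h0) (by simp [h1])
    · simp [h1, h0]
    · simp [h1, h0]
  have hnum2 : ∀ j, An j - Bn j =
      ∑ i ∈ univ.filter (fun i => D1 j i = true ∧ D0 j i = false),
        (Y j i true - Y j i false) := by
    intro j
    have : An j - Bn j = ∑ i, (Y j i (D1 j i) - Y j i (D0 j i)) := by
      simp [hAn, hBn, Finset.sum_sub_distrib]
    rw [this, Finset.sum_filter]
    refine Finset.sum_congr rfl fun i _ => ?_
    cases h1 : D1 j i <;> cases h0 : D0 j i
    · simp [h1, h0]
    · exact absurd (mono j i h0) (by simp [h1])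
    · simp [h1, h0]
    · simp [h1, h0]
  have hEden : clExpect J m den = (1 / (J : ℝ)) * ∑ j, (nCO j : ℝ) := by
    rw [hdenf, clExpect_lin J m hm0 hmJ]
    congr 1
    exact Finset.sum_congr rfl fun j _ => hden2 j
  have hEnum : clExpect J m num = (1 / (J : ℝ)) *
      ∑ j, ∑ i ∈ univ.filter (fun i => D1 j i = true ∧ D0 j i = false),
        (Y j i true - Y j i false) := by
    rw [hnumf, clExpect_lin J m hm0 hmJ]
    congr 1
    exact Finset.sum_congr rfl fun j _ => hnum2 j
  have hJpos : 0 < J := hm0.trans hmJ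
  have hSpos : 0 < ∑ j, (nCO j : ℝ) := by
    have : (0:ℝ) < ∑ j : Fin J, (1:ℝ) := by
      simp [Finset.card_univ]
      exact_mod_cast hJpos
    refine lt_of_lt_of_le this (Finset.sum_le_sum fun j _ => ?_)
    exact_mod_cast hnCO1 j
  have hJR : (0:ℝ) < 1 / (J : ℝ) := by
    have : (0:ℝ) < J := by exact_mod_cast hJpos
    positivity
  refine ⟨hEden, by rw [hEden]; positivity, ?_⟩
  rw [hEnum, hEden, hτ]
  rw [mul_div_mul_left _ _ (ne_of_gt hJR)]
end
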